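/- arXiv:1810.03177 — 6 statements merged into one kernel-verified Lean document; each statement's English description precedes it below -/
import Mathlib

section
/- Let G be a finite strongly connected digraph and let S be the set of all n ≥ 1 such that there is a closed directed walk of length n in G that uses every edge of G at least once. Then every element of S is a multiple of the algebraic length al(G), and conversely every sufficiently large multiple of al(G) belongs to S. -/
namespace Stmt1Aux

variable {V : Type} {E : Set (V × V)}

def IsWalk (E : Set (V × V)) (m : ℕ) (w : ℕ → V) (x y : V) : Prop :=
  w 0 = x ∧ w m = y ∧ ∀ i < m, (w i, w (i + 1)) ∈ E

def Cov (m : ℕ) (w : ℕ → V) (e : V × V) : Prop := ∃ i < m, (w i, w (i + 1)) = e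

theorem concat {m n : ℕ} {w1 w2 : ℕ → V} {x y z : V}
    (h1 : IsWalk E m w1 x y) (h2 : IsWalk E n w2 y z) :
    ∃ w, IsWalk E (m + n) w x z ∧
      ∀ e, (Cov m w1 e ∨ Cov n w2 e) → Cov (m + n) w e := by
  obtain ⟨h10, h1m, h1s⟩ := h1
  obtain ⟨h20, h2n, h2s⟩ := h2
  set w : ℕ → V := fun i => if i < m then w1 i else w2 (i - m) with hw
  have key1 : ∀ i < m, (w i, w (i + 1)) = (w1 i, w1 (i + 1)) := by
    intro i hi
    have e1 : w i = w1 i := by simp [hw, hi]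
    have e2 : w (i + 1) = w1 (i + 1) := by
      by_cases h : i + 1 < m
      · simp [hw, h]
      · have : i + 1 = m := by omega
        simp [hw, this, h20, h1m]
    rw [e1, e2]
  have key2 : ∀ j < n, (w (m + j), w (m + j + 1)) = (w2 j, w2 (j + 1)) := by
    intro j hj
    have e1 : w (m + j) = w2 j := by
      have : ¬ (m + j < m) := by omega
      simp [hw, this]
    have e2 : w (m + j + 1) = w2 (j + 1) := by
      have h3 : ¬ (m + j + 1 < m) := by omega
      have h4 : m + j + 1 - m = j + 1 := by omega
      simp [hw, h3, h4]
    rw [e1, e2]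
  refine ⟨w, ⟨?_, ?_, ?_⟩, ?_⟩
  · by_cases h : 0 < m
    · simp [hw, h, h10]
    · have hm0 : m = 0 := by omega
      subst hm0
      have hxy : x = y := by rw [← h10]; exact h1m
      simp [hw, h20, hxy]
  · have : ¬ (m + n < m) := by omega
    simp [hw, this, h2n]
  · intro i hi
    by_cases h : i < m
    · rw [key1 i h]; exact h1s i h
    · obtain ⟨j, rfl⟩ : ∃ j, i = m + j := ⟨i - m, by omega⟩
      have hj : j < n := by omega
      rw [key2 j hj]; exact h2s j hj
  · rintro e (⟨i, hi, he⟩ | ⟨j, hj, he⟩)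
    · exact ⟨i, by omega, (key1 i hi).trans he⟩
    · exact ⟨m + j, by omega, (key2 j hj).trans he⟩

theorem nil (x : V) : IsWalk E 0 (fun _ => x) x x := ⟨rfl, rfl, by omega⟩

theorem single {x y : V} (h : (x, y) ∈ E) :
    IsWalk E 1 (fun i => if i = 0 then x else y) x y := by
  refine ⟨by simp, by simp, ?_⟩
  intro i hi
  have : i = 0 := by omega
  simp [this, h]

theorem single_cov {x y : V} :
    Cov 1 (fun i => if i = 0 then x else y : ℕ → V) (x, y) := ⟨0, by omega, by simp⟩

theorem rep_lemma (s : ℕ) : ∀ k, s * s ≤ k → ∃ a b, k = a * s + b * (s + 1) := by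
  intro k hk
  rcases Nat.eq_zero_or_pos s with rfl | hs
  · exact ⟨0, k, by ring⟩
  · set q := k / s with hq
    set b := k % s with hb
    have hdm : s * q + b = k := by rw [hq, hb]; exact Nat.div_add_mod k s
    have hbs : b < s := Nat.mod_lt _ hs
    have hqs : s ≤ q := Nat.le_div_iff_mul_le hs |>.mpr (by nlinarith)
    refine ⟨q - b, b, ?_⟩
    have : (q - b) * s + b * (s + 1) = (q - b + b) * s + b := by ring
    rw [this, Nat.sub_add_cancel (by omega), mul_comm]
    omega

end Stmt1Aux

open Stmt1Aux in
/-- For a finite strongly connected digraph with an edge, the set `S` of lengths of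
edge-surjective closed directed walks consists only of multiples of the algebraic
length `d` (the gcd of algebraic lengths of oriented closed walks), and contains all
sufficiently large multiples of `d`. -/
theorem stmt1 {V : Type} [Fintype V] (E : Set (V × V)) (hE : E.Nonempty)
    (hsc : ∀ x y : V, ∃ m : ℕ, ∃ w : ℕ → V,
      w 0 = x ∧ w m = y ∧ ∀ i < m, (w i, w (i + 1)) ∈ E)
    (S : Set ℕ)
    (hS : ∀ n : ℕ, n ∈ S ↔ 1 ≤ n ∧ ∃ w : ℕ → V, w n = w 0 ∧
      (∀ i < n, (w i, w (i + 1)) ∈ E) ∧ ∀ e ∈ E, ∃ i < n, (w i, w (i + 1)) = e)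
    (d : ℕ)
    (hd1 : ∀ (m : ℕ) (w : ℕ → V) (ε : ℕ → Bool), w m = w 0 →
      (∀ i < m, if ε i then (w i, w (i + 1)) ∈ E else (w (i + 1), w i) ∈ E) →
      (d : ℤ) ∣ ∑ i ∈ Finset.range m, (if ε i then 1 else -1 : ℤ))
    (hd2 : ∀ e : ℕ, (∀ (m : ℕ) (w : ℕ → V) (ε : ℕ → Bool), w m = w 0 →
      (∀ i < m, if ε i then (w i, w (i + 1)) ∈ E else (w (i + 1), w i) ∈ E) →
      (e : ℤ) ∣ ∑ i ∈ Finset.range m, (if ε i then 1 else -1 : ℤ)) → e ∣ d) :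
    (∀ n ∈ S, d ∣ n) ∧ ∃ N : ℕ, ∀ k ≥ N, d * k ∈ S := by
  classical
  obtain ⟨e0, he0⟩ := hE
  set v0 : V := e0.1 with hv0
  choose len wlk hw0 hwm hws using hsc
  have wlkIs : ∀ x y : V, IsWalk E (len x y) (wlk x y) x y :=
    fun x y => ⟨hw0 x y, hwm x y, hws x y⟩
  set Acl : Set ℕ := {a | ∃ w, IsWalk E a w v0 v0} with hAclDef
  have h0A : (0 : ℕ) ∈ Acl := ⟨fun _ => v0, nil v0⟩
  have haddA : ∀ a ∈ Acl, ∀ b ∈ Acl, a + b ∈ Acl := by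
    rintro a ⟨w1, hw1⟩ b ⟨w2, hw2⟩
    obtain ⟨w, hw, -⟩ := concat hw1 hw2
    exact ⟨w, hw⟩
  have hdvd : ∀ (m : ℕ) (w : ℕ → V), w m = w 0 →
      (∀ i < m, (w i, w (i + 1)) ∈ E) → d ∣ m := by
    intro m w hc hsw
    have h := hd1 m w (fun _ => true) hc (by simpa using hsw)
    simp only [if_true, Finset.sum_const, Finset.card_range, smul_eq_mul, nsmul_eq_mul, mul_one] at h
    exact_mod_cast h
  have hdA : ∀ a ∈ Acl, d ∣ a := by
    rintro a ⟨w, hw0', hwm', hws'⟩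
    exact hdvd a w (by rw [hwm', hw0']) hws'
  let H : AddSubgroup ℤ :=
    { carrier := {z : ℤ | ∃ u ∈ Acl, ∃ v ∈ Acl, (u : ℤ) - v = z}
      zero_mem' := ⟨0, h0A, 0, h0A, by simp⟩
      add_mem' := by
        rintro a b ⟨u1, hu1, v1, hv1, rfl⟩ ⟨u2, hu2, v2, hv2, rfl⟩
        exact ⟨u1 + u2, haddA _ hu1 _ hu2, v1 + v2, haddA _ hv1 _ hv2, by push_cast; ring⟩
      neg_mem' := by
        rintro a ⟨u, hu, v, hv, rfl⟩
        exact ⟨v, hv, u, hu, by ring⟩ }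
  obtain ⟨g, hg⟩ := Int.subgroup_cyclic H
  have memH : ∀ z : ℤ, z ∈ H ↔ g ∣ z := by
    intro z
    rw [hg, AddSubgroup.mem_closure_singleton]
    constructor
    · rintro ⟨n, rfl⟩; exact ⟨n, by rw [smul_eq_mul, mul_comm]⟩
    · rintro ⟨n, rfl⟩; exact ⟨n, by rw [smul_eq_mul, mul_comm]⟩
  have hAH : ∀ a ∈ Acl, (a : ℤ) ∈ H := fun a ha => ⟨a, ha, 0, h0A, by simp⟩
  have hgA : ∀ a ∈ Acl, g ∣ (a : ℤ) := fun a ha => (memH _).mp (hAH a ha)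
  set lv : V → ℕ := fun x => len v0 x with hlv
  set rv : V → ℕ := fun x => len x v0 with hrv
  have hedge : ∀ a b : V, (a, b) ∈ E → g ∣ ((lv a : ℤ) + 1 - lv b) := by
    intro a b hab
    have h1 : lv a + 1 + rv b ∈ Acl := by
      obtain ⟨w', hw', -⟩ := concat (wlkIs v0 a) (single hab)
      obtain ⟨w'', hw'', -⟩ := concat hw' (wlkIs b v0)
      exact ⟨w'', hw''⟩
    have h2 : lv b + rv b ∈ Acl := by
      obtain ⟨w', hw', -⟩ := concat (wlkIs v0 b) (wlkIs b v0)
      exact ⟨w', hw'⟩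
    have hsub := dvd_sub (hgA _ h1) (hgA _ h2)
    have harith : ((lv a + 1 + rv b : ℕ) : ℤ) - ((lv b + rv b : ℕ) : ℤ)
        = (lv a : ℤ) + 1 - lv b := by push_cast; ring
    rwa [harith] at hsub
  have hgall : ∀ (m : ℕ) (w : ℕ → V) (ε : ℕ → Bool), w m = w 0 →
      (∀ i < m, if ε i then (w i, w (i + 1)) ∈ E else (w (i + 1), w i) ∈ E) →
      g ∣ ∑ i ∈ Finset.range m, (if ε i then 1 else -1 : ℤ) := by
    intro m w ε hc hsw
    have key : ∀ i ∈ Finset.range m,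
        g ∣ ((if ε i then 1 else -1 : ℤ) - ((lv (w (i + 1)) : ℤ) - lv (w i))) := by
      intro i hi
      rw [Finset.mem_range] at hi
      have hstep := hsw i hi
      by_cases hε : ε i
      · rw [if_pos hε] at hstep ⊢
        have h' := hedge _ _ hstep
        have e : (lv (w i) : ℤ) + 1 - lv (w (i + 1))
            = 1 - ((lv (w (i + 1)) : ℤ) - lv (w i)) := by ring
        rwa [e] at h'
      · rw [if_neg hε] at hstep ⊢
        have h' := hedge _ _ hstep
        have e : -((lv (w (i + 1)) : ℤ) + 1 - lv (w i))
            = -1 - ((lv (w (i + 1)) : ℤ) - lv (w i)) := by ring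
        rw [← e]
        exact dvd_neg.mpr h'
    have hsum := Finset.dvd_sum key
    have htel : ∑ i ∈ Finset.range m, ((lv (w (i + 1)) : ℤ) - lv (w i))
        = (lv (w m) : ℤ) - lv (w 0) := Finset.sum_range_sub (fun i => (lv (w i) : ℤ)) m
    rw [Finset.sum_sub_distrib, htel, hc, sub_self, sub_zero] at hsum
    exact hsum
  have hgd : g.natAbs ∣ d :=
    hd2 _ (fun m w ε hc hsw => Int.natAbs_dvd.mpr (hgall m w ε hc hsw))
  have cover : ∀ F : Set (V × V), F.Finite → F ⊆ E →
      ∃ L wL, IsWalk E L wL v0 v0 ∧ ∀ e ∈ F, Cov L wL e := by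
    intro F hF
    refine Set.Finite.induction_on (motive := fun F _ => F ⊆ E →
      ∃ L wL, IsWalk E L wL v0 v0 ∧ ∀ e ∈ F, Cov L wL e) F hF ?_ ?_
    · exact fun _ => ⟨0, fun _ => v0, nil v0, by simp⟩
    · intro a F' ha hF' ih hsubE
      have haE : a ∈ E := hsubE (Set.mem_insert a F')
      have hFE : F' ⊆ E := fun e he => hsubE (Set.mem_insert_of_mem a he)
      obtain ⟨L1, wL1, hwL1, hcov1⟩ := ih hFE
      have haE' : (a.1, a.2) ∈ E := by simpa using haE
      obtain ⟨u1, hu1, hu1c⟩ := concat (wlkIs v0 a.1) (single haE')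
      obtain ⟨u2, hu2, hu2c⟩ := concat hu1 (wlkIs a.2 v0)
      obtain ⟨u3, hu3, hu3c⟩ := concat hu2 hwL1
      refine ⟨_, u3, hu3, ?_⟩
      rintro e he
      rcases Set.mem_insert_iff.mp he with rfl | he'
      · exact hu3c _ (Or.inl (hu2c _ (Or.inl (hu1c _ (Or.inr single_cov)))))
      · exact hu3c _ (Or.inr (hcov1 e he'))
  obtain ⟨L, wL, hwL, hcovL⟩ := cover E (Set.toFinite E) (Set.Subset.refl E)
  have hL1 : 1 ≤ L := by
    obtain ⟨i, hi, -⟩ := hcovL e0 he0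
    omega
  have hdL : d ∣ L := hdA L ⟨wL, hwL⟩
  have hd0 : 0 < d := by
    rcases Nat.eq_zero_or_pos d with rfl | h
    · rw [zero_dvd_iff] at hdL; omega
    · exact h
  refine ⟨?_, ?_⟩
  · intro n hn
    obtain ⟨-, w, hc, hsw, -⟩ := (hS n).mp hn
    exact hdvd n w hc hsw
  · have hgH : g ∈ H := (memH g).mpr dvd_rfl
    obtain ⟨u, hu, v, hv, huv⟩ := hgH
    have hdg : (d : ℤ) ∣ g := by
      rw [← huv]
      exact dvd_sub (Int.natCast_dvd_natCast.mpr (hdA u hu))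
        (Int.natCast_dvd_natCast.mpr (hdA v hv))
    have hdg' : d ∣ g.natAbs := Int.natCast_dvd_natCast.mp (Int.dvd_natAbs.mpr hdg)
    have hdeq : d = g.natAbs := Nat.dvd_antisymm hdg' hgd
    have habs : (u : ℤ) - v = d ∨ (u : ℤ) - v = -d := by
      rw [huv, hdeq]
      exact Int.natAbs_eq g
    obtain ⟨p, hp, q, hq, hpq⟩ : ∃ p ∈ Acl, ∃ q ∈ Acl, p = q + d := by
      rcases habs with h | h
      · exact ⟨u, hu, v, hv, by omega⟩
      · exact ⟨v, hv, u, hu, by omega⟩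
    obtain ⟨s, hsq⟩ := hdA q hq
    have hp' : p = d * (s + 1) := by rw [hpq, hsq]; ring
    have hmul : ∀ (a x : ℕ), x ∈ Acl → a * x ∈ Acl := by
      intro a
      induction a with
      | zero => intro x _; simpa using h0A
      | succ n ih => intro x hx; rw [Nat.succ_mul]; exact haddA _ (ih x hx) _ hx
    have hAk : ∀ k, s * s ≤ k → d * k ∈ Acl := by
      intro k hk
      obtain ⟨a, b, hab⟩ := rep_lemma s k hk
      have heq : d * k = a * (d * s) + b * (d * (s + 1)) := by rw [hab]; ring
      rw [heq]
      exact haddA _ (hmul a _ (hsq ▸ hq)) _ (hmul b _ (hp' ▸ hp))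
    obtain ⟨lL, hlL⟩ := hdL
    refine ⟨lL + s * s, fun k hk => ?_⟩
    have hm : s * s ≤ k - lL := by omega
    obtain ⟨w2, hw2⟩ := hAk (k - lL) hm
    obtain ⟨w, hwIs, hwc⟩ := concat hwL hw2
    have hlen : d * k = L + d * (k - lL) := by
      rw [hlL, ← Nat.mul_add]
      congr 1
      omega
    rw [hS, hlen]
    have hlL1 : 1 ≤ lL := by
      rcases Nat.eq_zero_or_pos lL with rfl | h
      · omega
      · exact h
    refine ⟨by omega, w, ?_, hwIs.2.2, ?_⟩
    · rw [hwIs.2.1, hwIs.1]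
    · intro e he
      exact hwc e (Or.inl (hcovL e he))
end

section
/- A finite digraph G has a homomorphism to the directed n-cycle D_n if and only if every oriented closed walk in G has algebraic length divisible by n. In particular, the algebraic length of a weakly connected finite digraph G equals the largest n such that G maps homomorphically to D_n (or ∞ if G maps to ℤ). -/
inductive Reach {V : Type} (E : Set (V × V)) : V → V → ℤ → Prop
  | refl (v : V) : Reach E v v 0
  | fwd {u v w : V} {k : ℤ} : Reach E u v k → (v, w) ∈ E → Reach E u w (k + 1)
  | bwd {u v w : V} {k : ℤ} : Reach E u v k → (w, v) ∈ E → Reach E u w (k - 1)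

lemma Reach.trans' {V : Type} {E : Set (V × V)} {u v w : V} {k l : ℤ}
    (h1 : Reach E u v k) (h2 : Reach E v w l) : Reach E u w (k + l) := by
  induction h2 with
  | refl => simpa using h1
  | fwd h e ih => have := (ih).fwd e; convert this using 1; ring
  | bwd h e ih => have := (ih).bwd e; convert this using 1; ring

lemma Reach.symm' {V : Type} {E : Set (V × V)} {u v : V} {k : ℤ}
    (h : Reach E u v k) : Reach E v u (-k) := by
  induction h with
  | refl => simpa using Reach.refl (E := E) _
  | fwd h e ih =>
      have h1 : Reach E _ _ (0 - 1) := (Reach.refl _).bwd e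
      have := h1.trans' ih
      convert this using 1; ring
  | bwd h e ih =>
      have h1 : Reach E _ _ (0 + 1) := (Reach.refl _).fwd e
      have := h1.trans' ih
      convert this using 1; ring

lemma reach_walk {V : Type} {E : Set (V × V)} {u v : V} {k : ℤ}
    (h : Reach E u v k) :
    ∃ (m : ℕ) (w : ℕ → V) (ε : ℕ → Bool), w 0 = u ∧ w m = v ∧
      (∀ i < m, if ε i then (w i, w (i + 1)) ∈ E else (w (i + 1), w i) ∈ E) ∧
      ∑ i ∈ Finset.range m, (if ε i then 1 else -1 : ℤ) = k := by
  induction h with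
  | refl => exact ⟨0, fun _ => u, fun _ => true, rfl, rfl, by simp, by simp⟩
  | @fwd b c k h e ih =>
      obtain ⟨m, w, ε, h0, hm, he, hs⟩ := ih
      refine ⟨m + 1, Function.update w (m + 1) c, Function.update ε m true, ?_, ?_, ?_, ?_⟩
      · rw [Function.update_of_ne (by omega)]; exact h0
      · rw [Function.update_self]
      · intro i hi
        rcases Nat.lt_succ_iff_lt_or_eq.mp hi with hi | rfl
        · rw [Function.update_of_ne (by omega), Function.update_of_ne (by omega),
            Function.update_of_ne (by omega)]
          exact he i hi
        · rw [Function.update_self, Function.update_self,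
            Function.update_of_ne (by omega)]
          simpa [hm] using e
      · rw [Finset.sum_range_succ, Function.update_self]
        have : ∀ i ∈ Finset.range m, (if Function.update ε m true i then 1 else -1 : ℤ)
            = (if ε i then 1 else -1 : ℤ) := by
          intro i hi
          rw [Function.update_of_ne (by simp at hi; omega)]
        rw [Finset.sum_congr rfl this, hs]; simp
  | @bwd b c k h e ih =>
      obtain ⟨m, w, ε, h0, hm, he, hs⟩ := ih
      refine ⟨m + 1, Function.update w (m + 1) c, Function.update ε m false, ?_, ?_, ?_, ?_⟩
      · rw [Function.update_of_ne (by omega)]; exact h0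
      · rw [Function.update_self]
      · intro i hi
        rcases Nat.lt_succ_iff_lt_or_eq.mp hi with hi | rfl
        · rw [Function.update_of_ne (by omega), Function.update_of_ne (by omega),
            Function.update_of_ne (by omega)]
          exact he i hi
        · rw [Function.update_self, Function.update_self,
            Function.update_of_ne (by omega)]
          simpa [hm] using e
      · rw [Finset.sum_range_succ, Function.update_self]
        have : ∀ i ∈ Finset.range m, (if Function.update ε m false i then 1 else -1 : ℤ)
            = (if ε i then 1 else -1 : ℤ) := by
          intro i hi
          rw [Function.update_of_ne (by simp at hi; omega)]
        rw [Finset.sum_congr rfl this, hs]; simp; ring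

/-- A finite digraph has a homomorphism to the directed `n`-cycle `D_n` iff every
oriented closed walk has algebraic length divisible by `n`. -/
theorem stmt4 {V : Type} [Fintype V] (E : Set (V × V)) (n : ℕ) (hn : 0 < n) :
    (∃ f : V → ZMod n, ∀ p ∈ E, f p.2 = f p.1 + 1) ↔
    (∀ (m : ℕ) (w : ℕ → V) (ε : ℕ → Bool), w m = w 0 →
      (∀ i < m, if ε i then (w i, w (i + 1)) ∈ E else (w (i + 1), w i) ∈ E) →
      (n : ℤ) ∣ ∑ i ∈ Finset.range m, (if ε i then 1 else -1 : ℤ)) := by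
  haveI : NeZero n := ⟨hn.ne'⟩
  constructor
  · rintro ⟨f, hf⟩ m w ε hclosed hedges
    have key : ∀ j ≤ m, f (w j) = f (w 0) +
        ((∑ i ∈ Finset.range j, (if ε i then 1 else -1 : ℤ) : ℤ) : ZMod n) := by
      intro j hj
      induction j with
      | zero => simp
      | succ j ih =>
          have hjm : j < m := by omega
          have h1 := ih (by omega)
          have h2 := hedges j hjm
          rw [Finset.sum_range_succ]
          by_cases hε : ε j
          · simp only [hε, if_true] at h2 ⊢
            rw [hf _ h2, h1]; push_cast; ring
          · simp only [hε, if_false] at h2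
            have := hf _ h2
            simp only [hε, if_false]
            have : f (w (j+1)) = f (w j) - 1 := by rw [this]; ring
            rw [this, h1]; push_cast; ring
    have := key m le_rfl
    rw [hclosed] at this
    have h0 : ((∑ i ∈ Finset.range m, (if ε i then 1 else -1 : ℤ) : ℤ) : ZMod n) = 0 := by
      linear_combination -this
    exact (ZMod.intCast_zmod_eq_zero_iff_dvd _ n).mp h0
  · intro h
    let s : Setoid V := ⟨fun u v => ∃ k, Reach E u v k,
      ⟨fun v => ⟨0, Reach.refl v⟩,
       fun ⟨k, hk⟩ => ⟨-k, hk.symm'⟩,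
       fun ⟨k, hk⟩ ⟨l, hl⟩ => ⟨k + l, hk.trans' hl⟩⟩⟩
    have key : ∀ v : V, ∃ k : ℤ, Reach E (Quotient.out (s := s) (Quotient.mk s v)) v k :=
      fun v => Quotient.mk_out (s := s) v
    refine ⟨fun v => ((Classical.choose (key v) : ℤ) : ZMod n), ?_⟩
    rintro ⟨u, v⟩ hp
    simp only at *
    have hq : Quotient.mk s u = Quotient.mk s v :=
      Quotient.sound ⟨(0 : ℤ) + 1, (Reach.refl u).fwd hp⟩
    have h1 := Classical.choose_spec (key u)
    have h2 := Classical.choose_spec (key v)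
    set k1 := Classical.choose (key u) with hk1
    set k2 := Classical.choose (key v) with hk2
    have hout : Quotient.out (s := s) (Quotient.mk s u) = Quotient.out (s := s) (Quotient.mk s v) := by
      rw [hq]
    rw [hout] at h1
    have h3 : Reach E (Quotient.out (s := s) (Quotient.mk s v))
        (Quotient.out (s := s) (Quotient.mk s v)) ((k1 + 1) + (-k2)) :=
      (h1.fwd hp).trans' h2.symm'
    obtain ⟨m, w, ε, h0, hm, he, hs⟩ := reach_walk h3
    have hdvd := h m w ε (by rw [h0, hm]) he
    rw [hs] at hdvd
    have h4 : (((k1 + 1) + (-k2) : ℤ) : ZMod n) = 0 :=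
      (ZMod.intCast_zmod_eq_zero_iff_dvd _ n).mpr hdvd
    push_cast at h4
    linear_combination -h4
end

section
/- Every strongly connected loopless finite digraph G of algebraic length 1 is, for all sufficiently large p and sufficiently large odd c, a homomorphic image of DCP(2^p, c): there is a digraph homomorphism from DCP(2^p, c) onto G (in fact a homomorphism suffices). -/
namespace Stmt5Aux

variable {V : Type} (E : Set (V × V))

/-- `w` is a directed walk of length `m` from `x` to `y`. -/
def IsWalk (w : ℕ → V) (m : ℕ) (x y : V) : Prop :=
  w 0 = x ∧ w m = y ∧ ∀ i < m, (w i, w (i + 1)) ∈ E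

lemma walk_concat {w1 w2 : ℕ → V} {m n : ℕ} {x y z : V}
    (h1 : IsWalk E w1 m x y) (h2 : IsWalk E w2 n y z) :
    IsWalk E (fun i => if i < m then w1 i else w2 (i - m)) (m + n) x z := by
  obtain ⟨h10, h1m, h1e⟩ := h1
  obtain ⟨h20, h2n, h2e⟩ := h2
  refine ⟨?_, ?_, ?_⟩
  · by_cases hm : 0 < m
    · simpa [hm] using h10
    · have hm0 : m = 0 := by omega
      subst hm0
      simpa [h20, ← h10] using h1m.symm
  · have : ¬ (m + n < m) := by omega
    simpa [this, Nat.add_sub_cancel_left] using h2n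
  · intro i hi
    by_cases h : i + 1 < m
    · have hi' : i < m := by omega
      simpa [h, hi'] using h1e i hi'
    · by_cases h' : i < m
      · have him : i + 1 = m := by omega
        have hw : w2 (i + 1 - m) = w1 (i + 1) := by
          rw [show i + 1 - m = 0 from by omega, h20, ← h1m, him]
        simpa [h, h', hw, ← hw, show i + 1 - m = 0 from by omega] using h1e i h'
      · have hin : i - m < n := by omega
        have : i + 1 - m = (i - m) + 1 := by omega
        simpa [h, h', this] using h2e (i - m) hin

end Stmt5Aux

open Stmt5Aux

/-- Every strongly connected loopless finite digraph of algebraic length 1 is a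
homomorphic image of `DCP(2^p, c)` for all sufficiently large `p` and all
sufficiently large odd `c`; such a homomorphism is given by closed directed walks
of lengths `2^p` and `c` sharing a common base vertex. -/
theorem stmt5 {V : Type} [Fintype V] (E : Set (V × V)) (hE : E.Nonempty)
    (hloopless : ∀ x : V, (x, x) ∉ E)
    (hsc : ∀ x y : V, ∃ m : ℕ, ∃ w : ℕ → V,
      w 0 = x ∧ w m = y ∧ ∀ i < m, (w i, w (i + 1)) ∈ E)
    (hal : ∀ e : ℕ, (∀ (m : ℕ) (w : ℕ → V) (ε : ℕ → Bool), w m = w 0 →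
      (∀ i < m, if ε i then (w i, w (i + 1)) ∈ E else (w (i + 1), w i) ∈ E) →
      (e : ℤ) ∣ ∑ i ∈ Finset.range m, (if ε i then 1 else -1 : ℤ)) → e = 1) :
    ∃ P C : ℕ, ∀ p ≥ P, ∀ c ≥ C, Odd c →
      ∃ u w : ℕ → V, u 0 = w 0 ∧ u (2 ^ p) = u 0 ∧ w c = w 0 ∧
        (∀ i < 2 ^ p, (u i, u (i + 1)) ∈ E) ∧ (∀ i < c, (w i, w (i + 1)) ∈ E) := by
  classical
  obtain ⟨⟨x0, y0⟩, hx0y0⟩ := hE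
  set v : V := x0 with hv
  -- walks between vertices
  choose len wf hw using hsc
  -- the set of lengths of closed walks at v
  set S : Set ℕ := {n | ∃ w : ℕ → V, IsWalk E w n v v} with hS
  have h0S : 0 ∈ S := ⟨fun _ => v, rfl, rfl, by omega⟩
  have haddS : ∀ a ∈ S, ∀ b ∈ S, a + b ∈ S := by
    rintro a ⟨w1, hw1⟩ b ⟨w2, hw2⟩
    exact ⟨_, walk_concat E hw1 hw2⟩
  have hmulS : ∀ k s, s ∈ S → k * s ∈ S := by
    intro k s hs
    induction k with
    | zero => simpa using h0S
    | succ k ih => have := haddS _ ih _ hs; rwa [show (k+1)*s = k*s + s from by ring]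
  have h1S : (1 : ℕ) ∉ S := by
    rintro ⟨w, hw0, hw1, he⟩
    have := he 0 one_pos
    rw [hw0, hw1] at this
    exact hloopless v this
  -- the subgroup generated by S
  set H : AddSubgroup ℤ := AddSubgroup.closure ((fun n : ℕ => (n : ℤ)) '' S) with hH
  obtain ⟨g, hg⟩ := Int.subgroup_cyclic H
  set d : ℕ := g.natAbs with hd
  have hdvdS : ∀ s ∈ S, (d : ℤ) ∣ (s : ℤ) := by
    intro s hs
    have hsH : (s : ℤ) ∈ H := AddSubgroup.subset_closure ⟨s, hs, rfl⟩
    rw [hg, AddSubgroup.mem_closure_singleton] at hsH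
    obtain ⟨n, hn⟩ := hsH
    refine Int.natAbs_dvd.mpr ⟨n, ?_⟩
    rw [← hn, smul_eq_mul, mul_comm]
  -- edge potential lemma
  have hEdgeDvd : ∀ x y : V, (x, y) ∈ E →
      (d : ℤ) ∣ ((len v x : ℤ) + 1 - (len v y : ℤ)) := by
    intro x y hxy
    have wedge : IsWalk E (fun i => if i = 0 then x else y) 1 x y := by
      refine ⟨rfl, rfl, ?_⟩
      intro i hi
      interval_cases i
      simpa using hxy
    have w1 : IsWalk E (wf v x) (len v x) v x := hw v x
    have w3 : IsWalk E (wf y v) (len y v) y v := hw y v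
    have hs1 : len v x + 1 + len y v ∈ S :=
      ⟨_, walk_concat E (walk_concat E w1 wedge) w3⟩
    have hs2 : len v y + len y v ∈ S :=
      ⟨_, walk_concat E (hw v y) w3⟩
    have hd1 := hdvdS _ hs1
    have hd2 := hdvdS _ hs2
    have : (d : ℤ) ∣ _ := dvd_sub hd1 hd2
    convert this using 1
    push_cast
    ring
  -- d divides every algebraic closed walk length, so d = 1
  have hd1 : d = 1 := by
    apply hal d
    intro m w ε hclosed hedges
    have main : ∀ k, k ≤ m → (d : ℤ) ∣
        ((len v (w 0) : ℤ) + (∑ i ∈ Finset.range k, (if ε i then 1 else -1 : ℤ))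
          - (len v (w k) : ℤ)) := by
      intro k
      induction k with
      | zero => intro _; simp
      | succ k ih =>
        intro hk
        have hkm : k < m := hk
        have ihh := ih (le_of_lt hkm)
        rw [Finset.sum_range_succ]
        have hedge := hedges k hkm
        by_cases hε : ε k
        · simp only [hε, if_true] at hedge ⊢
          have h2 := hEdgeDvd _ _ hedge
          have h3 : (d : ℤ) ∣ _ := dvd_add ihh h2
          convert h3 using 1
          ring
        · simp only [hε, Bool.false_eq_true, if_false] at hedge ⊢
          have h2 := hEdgeDvd _ _ hedge
          have h3 : (d : ℤ) ∣ _ := dvd_sub ihh h2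
          convert h3 using 1
          ring
    have := main m le_rfl
    rw [hclosed] at this
    simpa using this
  -- hence 1 ∈ H, so there are a, a+1 ∈ S
  have hgH : g ∈ H := by
    rw [hg]
    exact AddSubgroup.subset_closure rfl
  have h1H : (1 : ℤ) ∈ H := by
    have hcase : g = 1 ∨ g = -1 := by omega
    rcases hcase with h | h
    · rwa [← h]
    · have := H.neg_mem hgH
      rw [h] at this
      simpa using this
  -- H is contained in differences of elements of S
  set K : AddSubgroup ℤ :=
    { carrier := {z | ∃ a ∈ S, ∃ b ∈ S, (a : ℤ) - (b : ℤ) = z}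
      zero_mem' := ⟨0, h0S, 0, h0S, by ring⟩
      add_mem' := by
        rintro x y ⟨a, ha, b, hb, rfl⟩ ⟨c, hc, e, he, rfl⟩
        exact ⟨a + c, haddS _ ha _ hc, b + e, haddS _ hb _ he, by push_cast; ring⟩
      neg_mem' := by
        rintro x ⟨a, ha, b, hb, rfl⟩
        exact ⟨b, hb, a, ha, by ring⟩ } with hK
  have hHK : H ≤ K := by
    rw [hH]
    refine (AddSubgroup.closure_le K).mpr ?_
    rintro _ ⟨s, hs, rfl⟩
    exact ⟨s, hs, 0, h0S, by simp⟩
  obtain ⟨a, ha, b, hb, hab⟩ := hHK h1H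
  have hab' : a = b + 1 := by omega
  -- b ≥ 1 since 1 ∉ S
  have hb1 : 1 ≤ b := by
    by_contra h
    have : b = 0 := by omega
    rw [this] at hab'
    rw [hab'] at ha
    exact h1S ha
  -- all n ≥ b*b are in S
  have hbig : ∀ n, b * b ≤ n → n ∈ S := by
    intro n hn
    set q := n / b with hq
    set r := n % b with hr
    have hrb : r < b := Nat.mod_lt n (by omega)
    have hdm : b * q + r = n := Nat.div_add_mod n b
    have hbq : b ≤ q := Nat.le_div_iff_mul_le (by omega) |>.mpr (by nlinarith)
    have hrq : r ≤ q := by omega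
    obtain ⟨t, ht⟩ := Nat.le.dest hrq
    have key : n = t * b + r * (b + 1) := by
      rw [← hdm, ← ht]
      ring
    rw [key]
    apply haddS _ (hmulS t b hb) _ (hmulS r (b + 1) (hab' ▸ ha))
  -- conclude
  refine ⟨b * b, b * b, ?_⟩
  intro p hp c hc _
  have h2p : b * b ≤ 2 ^ p := le_trans (le_trans hp (Nat.le_of_lt (Nat.lt_two_pow_self (n := p)))) le_rfl
  obtain ⟨u, hu0, hu2, hue⟩ := hbig (2 ^ p) h2p
  obtain ⟨w, hw0, hwc, hwe⟩ := hbig c hc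
  exact ⟨u, w, by rw [hu0, hw0], by rw [hu2, hu0], by rw [hwc, hw0], hue, hwe⟩
end

section
/- Let G be a digraph compatible with an n-ary cyclic operation c (n ≥ 2), meaning c applied coordinatewise to edges yields edges. If G contains a directed closed walk of length n (a homomorphism from D_n), then G has a loop. -/
/-- A digraph compatible with an `n`-ary cyclic operation that contains a directed
closed walk of length `n` has a loop. -/
theorem stmt8 {A : Type} (E : Set (A × A)) (n : ℕ) (hn : 2 ≤ n)
    (c : (Fin n → A) → A)
    (hcyc : ∀ x : Fin n → A,
      c x = c (fun i => x ⟨(i.val + 1) % n, Nat.mod_lt _ (by omega)⟩))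
    (hcomp : ∀ a b : Fin n → A, (∀ i, (a i, b i) ∈ E) → (c a, c b) ∈ E)
    (w : ℕ → A) (hw0 : w n = w 0) (hw : ∀ i < n, (w i, w (i + 1)) ∈ E) :
    ∃ x : A, (x, x) ∈ E := by
  set a : Fin n → A := fun i => w i.val with ha
  set b : Fin n → A := fun i => w ((i.val + 1) % n) with hb
  have hab : c a = c b := by
    rw [hcyc a]
  have hedge : ∀ i : Fin n, (a i, b i) ∈ E := by
    intro i
    simp only [ha, hb]
    rcases Nat.lt_or_ge (i.val + 1) n with h | h
    · rw [Nat.mod_eq_of_lt h]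
      exact hw i.val i.isLt
    · have : i.val = n - 1 := by omega
      have hmod : (i.val + 1) % n = 0 := by
        rw [this]; simp [Nat.sub_add_cancel (by omega : 1 ≤ n)]
      rw [hmod, ← hw0, this]
      have := hw (n - 1) (by omega)
      rwa [Nat.sub_add_cancel (by omega : 1 ≤ n)] at this
  exact ⟨c a, hab ▸ hcomp a b hedge⟩
end

section
/- Let A be a set with a ternary near-unanimity operation t (t(x,x,y) = t(x,y,x) = t(y,x,x) = x for all x, y), and let E ⊆ A × A be a binary relation compatible with t. Suppose E contains a 'cone': elements a, b, c₁, …, cₙ (n ≥ 2) with (cᵢ, cᵢ₊₁) ∈ E for 1 ≤ i < n, (cₙ, c₁) ∈ E, (a, cᵢ) ∈ E for all i, and (b, a) ∈ E. Then E contains a loop: some x with (x, x) ∈ E. -/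
/-- Auxiliary sequence: iteratively combine the cycle with the apex. -/
def dSeq {A : Type} (t : A → A → A → A) (a : A) (σ : ℕ → ℕ) (c : ℕ → A) :
    ℕ → ℕ → A
  | 0 => c
  | k + 1 => fun m => t a (dSeq t a σ c k m) (dSeq t a σ c k (σ m))

/-- A relation compatible with a ternary near-unanimity operation which contains a
cone has a loop. -/
theorem stmt15 {A : Type} (t : A → A → A → A)
    (ht1 : ∀ x y : A, t x x y = x) (ht2 : ∀ x y : A, t x y x = x)
    (ht3 : ∀ x y : A, t y x x = x)
    (E : Set (A × A))
    (hcomp : ∀ x₁ x₂ x₃ y₁ y₂ y₃ : A, (x₁, y₁) ∈ E → (x₂, y₂) ∈ E → (x₃, y₃) ∈ E →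
      (t x₁ x₂ x₃, t y₁ y₂ y₃) ∈ E)
    (n : ℕ) (hn : 2 ≤ n) (a b : A) (c : ℕ → A)
    (hcyc : ∀ i, 1 ≤ i → i < n → (c i, c (i + 1)) ∈ E)
    (hclose : (c n, c 1) ∈ E)
    (ha : ∀ i, 1 ≤ i → i ≤ n → (a, c i) ∈ E)
    (hb : (b, a) ∈ E) :
    ∃ x : A, (x, x) ∈ E := by
  classical
  -- cyclic successor on [1, n]
  set σ : ℕ → ℕ := fun m => if m = n then 1 else m + 1 with hσ
  have hσmem : ∀ m, 1 ≤ m → m ≤ n → 1 ≤ σ m ∧ σ m ≤ n := by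
    intro m h1 h2
    by_cases h : m = n <;> simp [hσ, h] <;> omega
  have hedge : ∀ m, 1 ≤ m → m ≤ n → (c m, c (σ m)) ∈ E := by
    intro m h1 h2
    by_cases h : m = n
    · simpa [hσ, h] using hclose
    · simpa [hσ, h] using hcyc m h1 (by omega)
  have hitmem : ∀ s m, 1 ≤ m → m ≤ n → 1 ≤ σ^[s] m ∧ σ^[s] m ≤ n := by
    intro s
    induction s with
    | zero => intro m h1 h2; simpa using ⟨h1, h2⟩
    | succ s ih =>
      intro m h1 h2
      rw [Function.iterate_succ_apply]
      exact ih (σ m) (hσmem m h1 h2).1 (hσmem m h1 h2).2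
  set d : ℕ → ℕ → A := dSeq t a σ c with hd
  have hd0 : ∀ m, d 0 m = c m := fun m => rfl
  have hds : ∀ k m, d (k + 1) m = t a (d k m) (d k (σ m)) := fun k m => rfl
  -- reach: d k m → c (σ^[s] m) for 1 ≤ s ≤ k+1
  have reach : ∀ k m s, 1 ≤ m → m ≤ n → 1 ≤ s → s ≤ k + 1 →
      (d k m, c (σ^[s] m)) ∈ E := by
    intro k
    induction k with
    | zero =>
      intro m s h1 h2 hs1 hs2
      have : s = 1 := by omega
      subst this
      simpa [hd0, Function.iterate_one] using hedge m h1 h2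
    | succ k ih =>
      intro m s h1 h2 hs1 hs2
      have hσm1 := (hσmem m h1 h2).1
      have hσm2 := (hσmem m h1 h2).2
      by_cases hcase : s ≤ k + 1
      · -- first two coordinates equal
        have e1 : (a, c (σ^[s] m)) ∈ E :=
          ha _ (hitmem s m h1 h2).1 (hitmem s m h1 h2).2
        have e2 : (d k m, c (σ^[s] m)) ∈ E := ih m s h1 h2 hs1 hcase
        have e3 : (d k (σ m), c (σ^[1] (σ m))) ∈ E :=
          ih (σ m) 1 hσm1 hσm2 le_rfl (by omega)
        have := hcomp a (d k m) (d k (σ m)) (c (σ^[s] m)) (c (σ^[s] m))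
          (c (σ^[1] (σ m))) e1 e2 e3
        rw [ht1] at this
        rwa [hds]
      · -- s = k + 2 ; first and third coordinates equal
        have hs : s = k + 2 := by omega
        subst hs
        have e1 : (a, c (σ^[k + 2] m)) ∈ E :=
          ha _ (hitmem (k + 2) m h1 h2).1 (hitmem (k + 2) m h1 h2).2
        have e2 : (d k m, c (σ^[1] m)) ∈ E := ih m 1 h1 h2 le_rfl (by omega)
        have e3 : (d k (σ m), c (σ^[k + 1] (σ m))) ∈ E :=
          ih (σ m) (k + 1) hσm1 hσm2 (by omega) le_rfl
        have hiter : σ^[k + 1] (σ m) = σ^[k + 2] m := by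
          rw [← Function.iterate_succ_apply]
        rw [hiter] at e3
        have := hcomp a (d k m) (d k (σ m)) (c (σ^[k + 2] m)) (c (σ^[1] m))
          (c (σ^[k + 2] m)) e1 e2 e3
        rw [ht2] at this
        rwa [hds]
  -- iterates of σ starting from 1
  have hiter1 : ∀ j, j ≤ n - 1 → σ^[j] 1 = j + 1 := by
    intro j
    induction j with
    | zero => intro _; simp
    | succ j ih =>
      intro hj
      rw [Function.iterate_succ_apply', ih (by omega)]
      have : j + 1 ≠ n := by omega
      simp [hσ, this]
  have hitern : σ^[n] 1 = 1 := by
    have hn1 : n = (n - 1) + 1 := by omega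
    rw [hn1, Function.iterate_succ_apply', hiter1 (n - 1) le_rfl]
    have : n - 1 + 1 = n := by omega
    rw [this]
    simp [hσ]
  set X : A := d (n - 1) 1 with hX
  -- X reaches every cycle vertex
  have hXc : ∀ m, 1 ≤ m → m ≤ n → (X, c m) ∈ E := by
    intro m h1 h2
    by_cases hm : m = 1
    · subst hm
      have := reach (n - 1) 1 n le_rfl (by omega) (by omega) (by omega)
      rwa [hitern] at this
    · have := reach (n - 1) 1 (m - 1) le_rfl (by omega) (by omega) (by omega)
      rwa [hiter1 (m - 1) (by omega), show m - 1 + 1 = m by omega] at this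
  -- X reaches every d k m
  have hXd : ∀ k m, 1 ≤ m → m ≤ n → (X, d k m) ∈ E := by
    intro k
    induction k with
    | zero => intro m h1 h2; simpa [hd0] using hXc m h1 h2
    | succ k ih =>
      intro m h1 h2
      have e2 := ih m h1 h2
      have e3 := ih (σ m) (hσmem m h1 h2).1 (hσmem m h1 h2).2
      have := hcomp b X X a (d k m) (d k (σ m)) hb e2 e3
      rw [ht3] at this
      rwa [hds]
  exact ⟨X, hXd (n - 1) 1 le_rfl (by omega)⟩
end

section
/- Let G₀ = (A₀, E₀) be a loopless digraph compatible with a 6-ary operation s₀ satisfying the Siggers identity, and let s₁ be the 6-ary arithmetic mean on ℚ (which also satisfies the Siggers identity). Define A = A₀ × ℚ with the product operation s, and the digraph E on A by ((x₁,q₁),(x₂,q₂)) ∈ E iff q₁ < q₂, or q₁ = q₂ and (x₁,x₂) ∈ E₀. Then E is compatible with s and E has no loop. -/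
/-- Product of a loopless digraph compatible with a Siggers operation with the
strict order on `ℚ` (lexicographic-style edges), under the product of the Siggers
operation with the 6-ary arithmetic mean (which also satisfies the Siggers
identity): the resulting edge relation is compatible and loopless. -/
theorem stmt19 {A₀ : Type} (E₀ : Set (A₀ × A₀)) (hloopless : ∀ x : A₀, (x, x) ∉ E₀)
    (s₀ : (Fin 6 → A₀) → A₀)
    (hsig : ∀ x y z : A₀, s₀ ![x, x, y, y, z, z] = s₀ ![y, z, z, x, x, y])
    (hcomp₀ : ∀ a b : Fin 6 → A₀, (∀ i, (a i, b i) ∈ E₀) → (s₀ a, s₀ b) ∈ E₀)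
    (s : (Fin 6 → A₀ × ℚ) → A₀ × ℚ)
    (hs : ∀ v : Fin 6 → A₀ × ℚ, s v = (s₀ (fun i => (v i).1), (∑ i, (v i).2) / 6))
    (E : Set ((A₀ × ℚ) × (A₀ × ℚ)))
    (hE : ∀ u v : A₀ × ℚ, (u, v) ∈ E ↔ u.2 < v.2 ∨ (u.2 = v.2 ∧ (u.1, v.1) ∈ E₀)) :
    (∀ x y z : ℚ, (x + x + y + y + z + z) / 6 = (y + z + z + x + x + y) / 6) ∧
    (∀ a b : Fin 6 → A₀ × ℚ, (∀ i, (a i, b i) ∈ E) → (s a, s b) ∈ E) ∧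
    (∀ u : A₀ × ℚ, (u, u) ∉ E) := by
  refine ⟨fun x y z => by ring, ?_, ?_⟩
  · intro a b hab
    have hle : ∀ i, (a i).2 ≤ (b i).2 := by
      intro i
      rcases (hE (a i) (b i)).1 (hab i) with h | ⟨h, _⟩
      · exact h.le
      · exact h.le
    rw [hE, hs, hs]
    by_cases hstrict : ∃ i, (a i).2 < (b i).2
    · left
      obtain ⟨j, hj⟩ := hstrict
      have : ∑ i, (a i).2 < ∑ i, (b i).2 :=
        Finset.sum_lt_sum (fun i _ => hle i) ⟨j, Finset.mem_univ j, hj⟩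
      dsimp only
      linarith
    · right
      push_neg at hstrict
      have heq : ∀ i, (a i).2 = (b i).2 := fun i => le_antisymm (hle i) (hstrict i)
      constructor
      · dsimp only
        congr 1
        exact Finset.sum_congr rfl (fun i _ => heq i)
      · apply hcomp₀
        intro i
        rcases (hE (a i) (b i)).1 (hab i) with h | ⟨_, h⟩
        · exact absurd h (not_lt.2 (hstrict i))
        · exact h
  · intro u hu
    rcases (hE u u).1 hu with h | ⟨_, h⟩
    · exact lt_irrefl _ h
    · exact hloopless u.1 h
end
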